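/- Let d be an odd positive integer that is not prime, Ω a set with d elements, k ≥ 3, and let 𝒟 = {D₁,…,Dₖ} be partitions of d with Σᵢ ν(Dᵢ) = d − 1. Let αᵢ ∈ Dᵢ and ω be permutations of Ω with ω² = α₁α₂⋯αₖ such that G = ⟨α₁,…,αₖ, ω⟩ is transitive. If gcd(D₁) (the gcd of the cycle lengths of α₁) is a proper divisor of d greater than 1 and the subgroup ⟨α₁,…,αₖ⟩ is not transitive on Ω, then G is imprimitive. -/

import Mathlib

/-- The cycle type of a permutation, including fixed points as parts equal to `1`. -/
def fullCycleType {Ω : Type*} [Fintype Ω] [DecidableEq Ω] (σ : Equiv.Perm Ω) : Multiset ℕ :=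
  σ.cycleType + Multiset.replicate (Fintype.card Ω - σ.support.card) 1

/-- A multiset of positive integers summing to `d`, i.e. a partition of `d`. -/
def IsPartitionOf (d : ℕ) (D : Multiset ℕ) : Prop :=
  (∀ x ∈ D, 0 < x) ∧ D.sum = d

/-- The defect `ν(D) = Σⱼ (dⱼ − 1)` of a partition. -/
def nu (D : Multiset ℕ) : ℕ := (D.map (· - 1)).sum

/-- The partition `[2,…,2,1]` of an odd number `d`, with `(d−1)/2` parts equal to `2`. -/
def twosAndOne (d : ℕ) : Multiset ℕ := Multiset.replicate ((d - 1) / 2) 2 + {1}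

/-- A subgroup of the symmetric group on `Ω` is transitive. -/
def SubgroupTransitive {Ω : Type*} (G : Subgroup (Equiv.Perm Ω)) : Prop :=
  ∀ x y : Ω, ∃ g ∈ G, g x = y

/-- `Λ` is a block for the subgroup `G` of the symmetric group on `Ω`. -/
def IsBlockOf {Ω : Type*} (G : Subgroup (Equiv.Perm Ω)) (Λ : Set Ω) : Prop :=
  Λ.Nonempty ∧ ∀ g ∈ G, (⇑g '' Λ = Λ ∨ Disjoint (⇑g '' Λ) Λ)

/-- A block is trivial if it is a singleton or the whole set. -/
def TrivialBlock {Ω : Type*} (Λ : Set Ω) : Prop :=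
  (∃ x, Λ = {x}) ∨ Λ = Set.univ

/-- A subgroup of the symmetric group is primitive: transitive with only trivial blocks. -/
def SubgroupPrimitive {Ω : Type*} (G : Subgroup (Equiv.Perm Ω)) : Prop :=
  SubgroupTransitive G ∧ ∀ Λ : Set Ω, IsBlockOf G Λ → TrivialBlock Λ

/-- A subgroup of the symmetric group is imprimitive: transitive but not primitive. -/
def SubgroupImprimitive {Ω : Type*} (G : Subgroup (Equiv.Perm Ω)) : Prop :=
  SubgroupTransitive G ∧ ¬ SubgroupPrimitive G

/-- The orbit of `x` under a subgroup `G` of the symmetric group on `Ω`. -/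
def orbSet {Ω : Type*} (G : Subgroup (Equiv.Perm Ω)) (x : Ω) : Set Ω :=
  {y | ∃ g ∈ G, g x = y}

/-- The number of orbits of a subgroup `G` of the symmetric group on `Ω`. -/
noncomputable def numOrbits {Ω : Type*} (G : Subgroup (Equiv.Perm Ω)) : ℕ :=
  Nat.card (Set.range (orbSet G))



open Equiv Equiv.Perm Function

section SetoidCount

variable {X : Type*}

/-- Number of classes of a setoid. -/
noncomputable def scnt (s : Setoid X) : ℕ := Nat.card (Quotient s)

lemma card_le_succ_of_almost_inj {A B : Type*} [Finite B] (f : A → B) (u₀ v₀ : A)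
    (h : ∀ u v, f u = f v → u = v ∨ (u = u₀ ∧ v = v₀) ∨ (u = v₀ ∧ v = u₀)) :
    Nat.card A ≤ Nat.card B + 1 := by
  classical
  have hinj : Function.Injective (fun u => if u = v₀ then (Sum.inr () : B ⊕ Unit) else Sum.inl (f u)) := by
    intro u v huv
    by_cases hu : u = v₀ <;> by_cases hv : v = v₀
    · exact hu.trans hv.symm
    · simp [hu, hv] at huv
    · simp [hu, hv] at huv
    · simp [hu, hv] at huv
      rcases h u v huv with h1 | h2 | h3
      · exact h1
      · exact absurd h2.2 hv
      · exact absurd h3.1 hu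
  calc Nat.card A ≤ Nat.card (B ⊕ Unit) := Nat.card_le_card_of_injective _ hinj
    _ = Nat.card B + 1 := by simp [Nat.card_sum]

lemma card_succ_le_of_surj_collision {A B : Type*} [Finite A] (f : A → B) (u₀ v₀ : A)
    (hs : Function.Surjective f) (hne : u₀ ≠ v₀) (hc : f u₀ = f v₀) :
    Nat.card B + 1 ≤ Nat.card A := by
  classical
  have : Finite B := Finite.of_surjective f hs
  have hinj : Function.Injective (fun x : B ⊕ Unit =>
      Sum.elim (fun b => if hb : b = f u₀ then u₀ else Classical.choose (hs b)) (fun _ => v₀) x) := by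
    intro x y hxy
    have hch : ∀ b, f (Classical.choose (hs b)) = b := fun b => Classical.choose_spec (hs b)
    rcases x with b | u <;> rcases y with b' | u'
    · simp only [Sum.elim_inl] at hxy
      by_cases hb : b = f u₀ <;> by_cases hb' : b' = f u₀
      · rw [hb, hb']
      · rw [dif_pos hb, dif_neg hb'] at hxy
        exfalso; apply hb'
        rw [← hch b', ← hxy]
      · rw [dif_neg hb, dif_pos hb'] at hxy
        exfalso; apply hb
        rw [← hch b, hxy]
      · rw [dif_neg hb, dif_neg hb'] at hxy
        rw [← hch b, hxy, hch b']
    · simp only [Sum.elim_inl, Sum.elim_inr] at hxy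
      exfalso
      by_cases hb : b = f u₀
      · rw [dif_pos hb] at hxy; exact hne hxy
      · rw [dif_neg hb] at hxy
        apply hb; rw [← hch b, hxy, ← hc]
    · simp only [Sum.elim_inl, Sum.elim_inr] at hxy
      exfalso
      by_cases hb : b' = f u₀
      · rw [dif_pos hb] at hxy; exact hne hxy.symm
      · rw [dif_neg hb] at hxy
        apply hb; rw [← hch b', ← hxy, ← hc]
    · simp
  calc Nat.card B + 1 = Nat.card (B ⊕ Unit) := by simp [Nat.card_sum]
    _ ≤ Nat.card A := Nat.card_le_card_of_injective _ hinj

lemma scnt_le_of_imp {s t : Setoid X} [Finite X] (h : ∀ x y, s.r x y → t.r x y) :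
    scnt t ≤ scnt s := by
  apply Nat.card_le_card_of_surjective (Quotient.map' id (fun x y hxy => h x y hxy))
  intro q
  obtain ⟨x, rfl⟩ := Quotient.exists_rep q
  exact ⟨Quotient.mk'' x, rfl⟩

lemma scnt_congr {s t : Setoid X} [Finite X] (h : ∀ x y, s.r x y ↔ t.r x y) :
    scnt s = scnt t :=
  le_antisymm (scnt_le_of_imp (fun x y => (h x y).2)) (scnt_le_of_imp (fun x y => (h x y).1))

lemma scnt_eq_card (s : Setoid X) [Fintype X] (h : ∀ x y : X, s.r x y ↔ x = y) :
    scnt s = Fintype.card X := by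
  have : Function.Bijective (Quotient.mk s) := by
    constructor
    · intro x y hxy
      exact (h x y).1 (Quotient.eq''.mp hxy)
    · exact Quotient.exists_rep
  rw [scnt, ← Nat.card_eq_of_bijective _ this, Nat.card_eq_fintype_card]

lemma scnt_eq_one (s : Setoid X) [Finite X] [Nonempty X] (h : ∀ x y : X, s.r x y) :
    scnt s = 1 := by
  rw [scnt, Nat.card_eq_one_iff_unique]
  constructor
  · constructor
    intro a b
    obtain ⟨x, rfl⟩ := Quotient.exists_rep a
    obtain ⟨y, rfl⟩ := Quotient.exists_rep b
    exact Quotient.sound (h x y)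
  · exact ⟨Quotient.mk s (Classical.arbitrary X)⟩

lemma scnt_le_card (s : Setoid X) [Fintype X] : scnt s ≤ Fintype.card X := by
  rw [← Nat.card_eq_fintype_card]
  exact Nat.card_le_card_of_surjective _ Quotient.exists_rep

/-- Merge the classes of `a` and `b` in setoid `s`. -/
def mrg (s : Setoid X) (a b : X) : Setoid X where
  r x y := s.r x y ∨ (s.r x a ∧ s.r b y) ∨ (s.r x b ∧ s.r a y)
  iseqv := by
    obtain ⟨refl, symm, trans⟩ := s.iseqv
    constructor
    · intro x; exact Or.inl (refl x)
    · rintro x y (h | ⟨h1, h2⟩ | ⟨h1, h2⟩)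
      · exact Or.inl (symm h)
      · exact Or.inr (Or.inr ⟨symm h2, symm h1⟩)
      · exact Or.inr (Or.inl ⟨symm h2, symm h1⟩)
    · rintro x y z (h | ⟨h1, h2⟩ | ⟨h1, h2⟩) (h' | ⟨h1', h2'⟩ | ⟨h1', h2'⟩)
      · exact Or.inl (trans h h')
      · exact Or.inr (Or.inl ⟨trans h h1', h2'⟩)
      · exact Or.inr (Or.inr ⟨trans h h1', h2'⟩)
      · exact Or.inr (Or.inl ⟨h1, trans h2 h'⟩)
      · exact Or.inr (Or.inl ⟨h1, h2'⟩)
      · exact Or.inl (trans h1 h2')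
      · exact Or.inr (Or.inr ⟨h1, trans h2 h'⟩)
      · exact Or.inl (trans h1 h2')
      · exact Or.inr (Or.inr ⟨h1, h2'⟩)

lemma mrg_rel_left {s : Setoid X} {a b : X} : ∀ x y, s.r x y → (mrg s a b).r x y :=
  fun _ _ h => Or.inl h

lemma mrg_rel_ab (s : Setoid X) (a b : X) : (mrg s a b).r a b :=
  Or.inr (Or.inl ⟨s.refl a, s.refl b⟩)

lemma mrg_eq_of_rel {s : Setoid X} {a b : X} (h : s.r a b) :
    ∀ x y, (mrg s a b).r x y ↔ s.r x y := by
  intro x y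
  constructor
  · rintro (h' | ⟨h1, h2⟩ | ⟨h1, h2⟩)
    · exact h'
    · exact s.trans h1 (s.trans h h2)
    · exact s.trans h1 (s.trans (s.symm h) h2)
  · exact Or.inl

lemma scnt_le_scnt_mrg_succ (s : Setoid X) [Finite X] (a b : X) :
    scnt s ≤ scnt (mrg s a b) + 1 := by
  classical
  apply card_le_succ_of_almost_inj (Quotient.map' id (mrg_rel_left)) (Quotient.mk s a) (Quotient.mk s b)
  intro u v huv
  obtain ⟨x, rfl⟩ := Quotient.exists_rep u
  obtain ⟨y, rfl⟩ := Quotient.exists_rep v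
  have : (mrg s a b).r x y := Quotient.eq''.mp huv
  rcases this with h | ⟨h1, h2⟩ | ⟨h1, h2⟩
  · exact Or.inl (Quotient.sound h)
  · exact Or.inr (Or.inl ⟨Quotient.sound h1, Quotient.sound (s.symm h2)⟩)
  · exact Or.inr (Or.inr ⟨Quotient.sound h1, Quotient.sound (s.symm h2)⟩)

lemma scnt_mrg_succ_le (s : Setoid X) [Finite X] {a b : X} (h : ¬ s.r a b) :
    scnt (mrg s a b) + 1 ≤ scnt s := by
  apply card_succ_le_of_surj_collision (Quotient.map' id mrg_rel_left)
      (Quotient.mk s a) (Quotient.mk s b)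
  · intro q
    obtain ⟨x, rfl⟩ := Quotient.exists_rep q
    exact ⟨Quotient.mk s x, rfl⟩
  · intro hab
    exact h (Quotient.eq''.mp hab)
  · exact Quotient.sound (mrg_rel_ab s a b)

end SetoidCount

theorem Equiv.Perm.inv_apply_self {β : Type*} (f : Equiv.Perm β) (x : β) : f⁻¹ (f x) = x :=
  Equiv.symm_apply_apply f x

theorem Equiv.Perm.apply_inv_self {β : Type*} (f : Equiv.Perm β) (x : β) : f (f⁻¹ x) = x :=
  Equiv.apply_symm_apply f x

section OrbitSetoids

variable {X : Type*} [Fintype X] [DecidableEq X]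

open Subgroup

/-- Orbit setoid of the cyclic group generated by a permutation. -/
def pOrb (σ : Equiv.Perm X) : Setoid X where
  r x y := ∃ i : ℕ, (σ ^ i) x = y
  iseqv := by
    constructor
    · exact fun x => ⟨0, rfl⟩
    · rintro x y ⟨i, rfl⟩
      refine ⟨i * (orderOf σ - 1), ?_⟩
      rw [← Equiv.Perm.mul_apply, ← pow_add]
      have ho : 0 < orderOf σ := orderOf_pos σ
      have : i * (orderOf σ - 1) + i = i * orderOf σ := by
        have : orderOf σ - 1 + 1 = orderOf σ := Nat.succ_pred_eq_of_pos ho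
        calc i * (orderOf σ - 1) + i = i * (orderOf σ - 1 + 1) := by ring
          _ = i * orderOf σ := by rw [this]
      rw [this, mul_comm, pow_mul, pow_orderOf_eq_one, one_pow, Equiv.Perm.one_apply]
    · rintro x y z ⟨i, rfl⟩ ⟨j, rfl⟩
      exact ⟨j + i, by rw [pow_add, Equiv.Perm.mul_apply]⟩

/-- Orbit setoid of the subgroup generated by a set of permutations. -/
def gOrb (S : Set (Equiv.Perm X)) : Setoid X where
  r x y := ∃ g ∈ Subgroup.closure S, g x = y
  iseqv := by
    constructor
    · exact fun x => ⟨1, one_mem _, rfl⟩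
    · rintro x y ⟨g, hg, rfl⟩
      exact ⟨g⁻¹, inv_mem hg, Equiv.Perm.inv_apply_self g x⟩
    · rintro x y z ⟨g, hg, rfl⟩ ⟨h, hh, rfl⟩
      exact ⟨h * g, mul_mem hh hg, rfl⟩

lemma pOrb_le_gOrb {S : Set (Equiv.Perm X)} {σ : Equiv.Perm X} (hσ : σ ∈ Subgroup.closure S) :
    ∀ x y, (pOrb σ).r x y → (gOrb S).r x y := by
  rintro x y ⟨i, rfl⟩
  exact ⟨σ ^ i, pow_mem hσ i, rfl⟩

lemma zpow_apply_to_pow (g : Equiv.Perm X) (n : ℤ) (x : X) :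
    ∃ i : ℕ, (g ^ i) x = (g ^ n) x := by
  have ho : 0 < orderOf g := orderOf_pos g
  refine ⟨(n % (orderOf g : ℤ)).toNat, ?_⟩
  have hnn : 0 ≤ n % (orderOf g : ℤ) :=
    Int.emod_nonneg n (by exact_mod_cast ho.ne')
  rw [← zpow_natCast, Int.toNat_of_nonneg hnn, zpow_mod_orderOf]

lemma gOrb_singleton (σ : Equiv.Perm X) :
    ∀ x y, (gOrb {σ}).r x y ↔ (pOrb σ).r x y := by
  intro x y
  constructor
  · rintro ⟨g, hg, rfl⟩
    obtain ⟨n, rfl⟩ := Subgroup.mem_closure_singleton.mp hg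
    obtain ⟨i, hi⟩ := zpow_apply_to_pow σ n x
    exact ⟨i, hi⟩
  · exact pOrb_le_gOrb (Subgroup.subset_closure (Set.mem_singleton σ)) x y

lemma sameCycle_to_pOrb {σ : Equiv.Perm X} {x y : X} (h : σ.SameCycle x y) :
    (pOrb σ).r x y := by
  obtain ⟨n, hn⟩ := h
  obtain ⟨i, hi⟩ := zpow_apply_to_pow σ n x
  exact ⟨i, by rw [hi, hn]⟩

lemma mrg_congr {s t : Setoid X} (h : ∀ x y, s.r x y ↔ t.r x y) (a b : X) :
    ∀ x y, (mrg s a b).r x y ↔ (mrg t a b).r x y := by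
  intro x y
  unfold mrg
  simp only
  rw [h, h, h, h, h]

/-- Adding a swap to a generating set merges the orbits of its endpoints. -/
lemma gOrb_insert_swap (S : Set (Equiv.Perm X)) (a b : X) :
    ∀ x y, (gOrb (insert (Equiv.swap a b) S)).r x y ↔ (mrg (gOrb S) a b).r x y := by
  intro x y
  constructor
  · rintro ⟨g, hg, rfl⟩
    refine Subgroup.closure_induction
      (p := fun g _ => ∀ x, (mrg (gOrb S) a b).r x (g x)) ?_ ?_ ?_ ?_ hg x
    · intro t ht x
      rcases Set.mem_insert_iff.mp ht with rfl | ht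
      · by_cases hxa : x = a
        · rw [hxa, Equiv.swap_apply_left]
          exact Or.inr (Or.inl ⟨(gOrb S).refl a, (gOrb S).refl b⟩)
        · by_cases hxb : x = b
          · rw [hxb, Equiv.swap_apply_right]
            exact Or.inr (Or.inr ⟨(gOrb S).refl b, (gOrb S).refl a⟩)
          · rw [Equiv.swap_apply_of_ne_of_ne hxa hxb]
      · exact mrg_rel_left _ _ ⟨t, Subgroup.subset_closure ht, rfl⟩
    · intro x; simpa using (mrg (gOrb S) a b).refl x
    · intro g h _ _ ihg ihh x
      rw [Equiv.Perm.mul_apply]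
      exact (mrg (gOrb S) a b).trans (ihh x) (ihg (h x))
    · intro g _ ihg x
      have := ihg (g⁻¹ x)
      rw [Equiv.Perm.apply_inv_self] at this
      exact (mrg (gOrb S) a b).symm this
  · rintro (h | ⟨h1, h2⟩ | ⟨h1, h2⟩)
    · obtain ⟨g, hg, rfl⟩ := h
      exact ⟨g, Subgroup.closure_mono (Set.subset_insert _ _) hg, rfl⟩
    · -- x ~ a, then swap, then b ~ y
      obtain ⟨g, hg, hga⟩ := h1
      obtain ⟨h, hh, hhy⟩ := h2
      refine ⟨h * Equiv.swap a b * g, ?_, ?_⟩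
      · exact mul_mem (mul_mem (Subgroup.closure_mono (Set.subset_insert _ _) hh)
          (Subgroup.subset_closure (Set.mem_insert _ _)))
          (Subgroup.closure_mono (Set.subset_insert _ _) hg)
      · rw [Equiv.Perm.mul_apply, Equiv.Perm.mul_apply, hga, Equiv.swap_apply_left, hhy]
    · obtain ⟨g, hg, hgb⟩ := h1
      obtain ⟨h, hh, hhy⟩ := h2
      refine ⟨h * Equiv.swap a b * g, ?_, ?_⟩
      · exact mul_mem (mul_mem (Subgroup.closure_mono (Set.subset_insert _ _) hh)
          (Subgroup.subset_closure (Set.mem_insert _ _)))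
          (Subgroup.closure_mono (Set.subset_insert _ _) hg)
      · rw [Equiv.Perm.mul_apply, Equiv.Perm.mul_apply, hgb, Equiv.swap_apply_right, hhy]

end OrbitSetoids

section Surgery

variable {X : Type*} [Fintype X] [DecidableEq X]

open Function

lemma perm_pow_apply (σ : Equiv.Perm X) (i : ℕ) (x : X) : (⇑σ)^[i] x = (σ ^ i) x := by
  rw [Equiv.Perm.iterate_eq_pow]

lemma periodicPts_all (σ : Equiv.Perm X) (x : X) : x ∈ Function.periodicPts ⇑σ :=
  ⟨orderOf σ, orderOf_pos σ, by
    show (⇑σ)^[orderOf σ] x = x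
    rw [perm_pow_apply, pow_orderOf_eq_one]; rfl⟩

lemma minPeriod_pos (σ : Equiv.Perm X) (x : X) : 0 < Function.minimalPeriod ⇑σ x :=
  Function.minimalPeriod_pos_of_mem_periodicPts (periodicPts_all σ x)

lemma pow_minPeriod_apply (σ : Equiv.Perm X) (x : X) :
    (σ ^ (Function.minimalPeriod ⇑σ x)) x = x := by
  rw [← perm_pow_apply]; exact Function.iterate_minimalPeriod

lemma pow_apply_ne_self (σ : Equiv.Perm X) (x : X) {i : ℕ} (h0 : 0 < i)
    (hlt : i < Function.minimalPeriod ⇑σ x) : (σ ^ i) x ≠ x := by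
  intro hfix
  exact Function.not_isPeriodicPt_of_pos_of_lt_minimalPeriod h0.ne' hlt
    (by show (⇑σ)^[i] x = x; rw [perm_pow_apply]; exact hfix)

/-- The walk lemma: multiplying by a swap whose endpoints lie in different cycles. -/
lemma walk_lemma {σ : Equiv.Perm X} {a b : X} (hnr : ¬ (pOrb σ).r a b) :
    ∀ i, 0 < i → i ≤ Function.minimalPeriod ⇑σ a →
      ((σ * Equiv.swap a b) ^ i) b = (σ ^ i) a := by
  have hne : a ≠ b := fun h => hnr (h ▸ (pOrb σ).refl a)
  intro i
  induction i with
  | zero => intro h; exact absurd h (lt_irrefl 0)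
  | succ i ih =>
    intro _ hle
    rcases Nat.eq_zero_or_pos i with rfl | hi
    · -- base case i+1 = 1
      rw [zero_add, pow_one, pow_one, Equiv.Perm.mul_apply, Equiv.swap_apply_right]
    · have hile : i ≤ Function.minimalPeriod ⇑σ a := le_trans (Nat.le_succ i) hle
      have hprev := ih hi hile
      have hia : (σ ^ i) a ≠ a := pow_apply_ne_self σ a hi (lt_of_lt_of_le (Nat.lt_succ_of_le le_rfl) hle)
      have hib : (σ ^ i) a ≠ b := fun h => hnr ⟨i, h⟩
      rw [pow_succ', Equiv.Perm.mul_apply, hprev, Equiv.Perm.mul_apply,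
        Equiv.swap_apply_of_ne_of_ne hia hib, ← Equiv.Perm.mul_apply, ← pow_succ']

lemma merge_relates {σ : Equiv.Perm X} {a b : X} (hnr : ¬ (pOrb σ).r a b) :
    (pOrb (σ * Equiv.swap a b)).r b a := by
  refine ⟨Function.minimalPeriod ⇑σ a, ?_⟩
  rw [walk_lemma hnr _ (minPeriod_pos σ a) le_rfl, pow_minPeriod_apply]

/-- Hub: everything in the `σ`-class of `a` is in the `τ`-class of `b`. -/
lemma merge_hub {σ : Equiv.Perm X} {a b : X} (hnr : ¬ (pOrb σ).r a b) :
    ∀ z, (pOrb σ).r a z → (pOrb (σ * Equiv.swap a b)).r b z := by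
  rintro z ⟨i, rfl⟩
  have hmod : (σ ^ (i % Function.minimalPeriod ⇑σ a)) a = (σ ^ i) a := by
    rw [← perm_pow_apply, ← perm_pow_apply]
    exact Function.iterate_mod_minimalPeriod_eq
  rcases Nat.eq_zero_or_pos (i % Function.minimalPeriod ⇑σ a) with h0 | hpos
  · rw [← hmod, h0, pow_zero, Equiv.Perm.one_apply]
    exact merge_relates hnr
  · rw [← hmod]
    exact ⟨i % Function.minimalPeriod ⇑σ a,
      walk_lemma hnr _ hpos (le_of_lt (Nat.mod_lt i (minPeriod_pos σ a)))⟩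

/-- Unaffected classes transport. -/
lemma merge_untouched {σ : Equiv.Perm X} {a b x : X}
    (hxa : ¬ (pOrb σ).r x a) (hxb : ¬ (pOrb σ).r x b) :
    ∀ i : ℕ, ((σ * Equiv.swap a b) ^ i) x = (σ ^ i) x := by
  intro i
  induction i with
  | zero => rfl
  | succ i ih =>
    have hia : (σ ^ i) x ≠ a := fun h => hxa ⟨i, h⟩
    have hib : (σ ^ i) x ≠ b := fun h => hxb ⟨i, h⟩
    rw [pow_succ', Equiv.Perm.mul_apply, ih, Equiv.Perm.mul_apply,
      Equiv.swap_apply_of_ne_of_ne hia hib, ← Equiv.Perm.mul_apply, ← pow_succ']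

lemma merge_imp {σ : Equiv.Perm X} {a b : X} (hnr : ¬ (pOrb σ).r a b) :
    ∀ x y, (mrg (pOrb σ) a b).r x y → (pOrb (σ * Equiv.swap a b)).r x y := by
  set τ := σ * Equiv.swap a b with hτ
  have hnr' : ¬ (pOrb σ).r b a := fun h => hnr ((pOrb σ).symm h)
  have hub : ∀ z, (pOrb σ).r a z → (pOrb τ).r b z := merge_hub hnr
  have hub' : ∀ z, (pOrb σ).r b z → (pOrb τ).r a z := by
    have : τ = σ * Equiv.swap b a := by rw [hτ, Equiv.swap_comm]
    rw [this]
    exact merge_hub hnr'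
  have hba : (pOrb τ).r b a := merge_relates hnr
  rintro x y (h | ⟨h1, h2⟩ | ⟨h1, h2⟩)
  · by_cases hax : (pOrb σ).r a x
    · have hay : (pOrb σ).r a y := (pOrb σ).trans hax h
      exact (pOrb τ).trans ((pOrb τ).symm (hub x hax)) (hub y hay)
    · by_cases hbx : (pOrb σ).r b x
      · have hby : (pOrb σ).r b y := (pOrb σ).trans hbx h
        exact (pOrb τ).trans ((pOrb τ).symm (hub' x hbx)) (hub' y hby)
      · obtain ⟨i, rfl⟩ := h
        exact ⟨i, merge_untouched (fun hh => hax ((pOrb σ).symm hh))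
          (fun hh => hbx ((pOrb σ).symm hh)) i⟩
  · -- x ~ a  and  b ~ y
    have h1' : (pOrb τ).r b x := hub x ((pOrb σ).symm h1)
    have h2' : (pOrb τ).r a y := hub' y h2
    exact (pOrb τ).trans ((pOrb τ).symm h1') ((pOrb τ).trans hba h2')
  · have h1' : (pOrb τ).r a x := hub' x ((pOrb σ).symm h1)
    have h2' : (pOrb τ).r b y := hub y h2
    exact (pOrb τ).trans ((pOrb τ).symm h1') ((pOrb τ).trans ((pOrb τ).symm hba) h2')

lemma pOrb_mul_swap_imp_mrg (σ : Equiv.Perm X) (a b : X) :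
    ∀ x y, (pOrb (σ * Equiv.swap a b)).r x y → (mrg (pOrb σ) a b).r x y := by
  intro x y h
  have h1 : (gOrb (insert (Equiv.swap a b) {σ})).r x y := by
    apply pOrb_le_gOrb _ x y h
    exact mul_mem (Subgroup.subset_closure (Set.mem_insert_of_mem _ (Set.mem_singleton σ)))
      (Subgroup.subset_closure (Set.mem_insert _ _))
  rw [gOrb_insert_swap] at h1
  exact (mrg_congr (gOrb_singleton σ) a b x y).mp h1

/-- Exact merge count. -/
lemma scnt_merge {σ : Equiv.Perm X} {a b : X} (hnr : ¬ (pOrb σ).r a b) :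
    scnt (pOrb σ) = scnt (pOrb (σ * Equiv.swap a b)) + 1 := by
  have hiff : ∀ x y, (pOrb (σ * Equiv.swap a b)).r x y ↔ (mrg (pOrb σ) a b).r x y :=
    fun x y => ⟨pOrb_mul_swap_imp_mrg σ a b x y, merge_imp hnr x y⟩
  have he : scnt (pOrb (σ * Equiv.swap a b)) = scnt (mrg (pOrb σ) a b) := scnt_congr hiff
  rw [he]
  exact le_antisymm (scnt_le_scnt_mrg_succ _ a b) (scnt_mrg_succ_le _ hnr)

lemma pow_mod_cycle {p : Equiv.Perm X} {j : ℕ} {y : X} (hp : (p ^ j) y = y) :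
    ∀ i, (p ^ i) y = (p ^ (i % j)) y := by
  intro i
  have key : ∀ q, ((p ^ j) ^ q) y = y := by
    intro q
    induction q with
    | zero => rfl
    | succ q ih => rw [pow_succ', Equiv.Perm.mul_apply, ih, hp]
  conv_lhs => rw [← Nat.mod_add_div i j]
  rw [pow_add, Equiv.Perm.mul_apply, pow_mul, key]

lemma split_not_rel {σ : Equiv.Perm X} {a b : X} (h : (pOrb σ).r a b) (hne : a ≠ b) :
    ¬ (pOrb (σ * Equiv.swap a b)).r a b := by
  classical
  set τ := σ * Equiv.swap a b with hτ
  have hex : ∃ j, 0 < j ∧ (σ ^ j) a = b := by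
    obtain ⟨i, hi⟩ := h
    refine ⟨i, ?_, hi⟩
    rcases Nat.eq_zero_or_pos i with rfl | hp
    · exact absurd hi hne
    · exact hp
  set j := Nat.find hex with hj
  obtain ⟨hjpos, hjb⟩ := Nat.find_spec hex
  rw [← hj] at hjpos hjb
  have hmin : ∀ i, 0 < i → i < j → (σ ^ i) a ≠ b := by
    intro i hi hij hib
    exact Nat.find_min hex hij ⟨hi, hib⟩
  have hnota : ∀ i, 0 < i → i < j → (σ ^ i) a ≠ a := by
    intro i hi hij hia
    apply hmin (j - i) (Nat.sub_pos_of_lt hij) (Nat.sub_lt_of_pos_le hi (le_of_lt hij))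
    have hkey : (σ ^ j) a = (σ ^ (j - i)) a := by
      conv_lhs => rw [← Nat.sub_add_cancel (le_of_lt hij)]
      rw [pow_add, Equiv.Perm.mul_apply, hia]
    rw [← hkey]
    exact hjb
  -- walk : τ^i b = σ^i a for 0 < i < j
  have hwalk : ∀ i, 0 < i → i < j → (τ ^ i) b = (σ ^ i) a := by
    intro i
    induction i with
    | zero => intro h0; exact absurd h0 (lt_irrefl 0)
    | succ i ih =>
      intro _ hij
      rcases Nat.eq_zero_or_pos i with rfl | hi
      · rw [zero_add, pow_one, pow_one, hτ, Equiv.Perm.mul_apply, Equiv.swap_apply_right]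
      · have hprev := ih hi (lt_trans (Nat.lt_succ_self i) hij)
        have h1 : (σ ^ i) a ≠ a := hnota i hi (lt_trans (Nat.lt_succ_self i) hij)
        have h2 : (σ ^ i) a ≠ b := hmin i hi (lt_trans (Nat.lt_succ_self i) hij)
        rw [pow_succ', Equiv.Perm.mul_apply, hprev, hτ, Equiv.Perm.mul_apply,
          Equiv.swap_apply_of_ne_of_ne h1 h2, ← Equiv.Perm.mul_apply, ← pow_succ']
  have hcycle : (τ ^ j) b = b := by
    rcases Nat.lt_or_ge 1 j with hj1 | hj1
    · have : j - 1 + 1 = j := Nat.succ_pred_eq_of_pos hjpos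
      rw [← this, pow_succ', Equiv.Perm.mul_apply,
        hwalk (j-1) (by omega) (by omega), hτ, Equiv.Perm.mul_apply]
      have h1 : (σ ^ (j-1)) a ≠ a := hnota (j-1) (by omega) (by omega)
      have h2 : (σ ^ (j-1)) a ≠ b := hmin (j-1) (by omega) (by omega)
      rw [Equiv.swap_apply_of_ne_of_ne h1 h2, ← Equiv.Perm.mul_apply, ← pow_succ', this, hjb]
    · have hj1' : j = 1 := le_antisymm hj1 hjpos
      rw [hj1', pow_one, hτ, Equiv.Perm.mul_apply, Equiv.swap_apply_right]
      rw [hj1', pow_one] at hjb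
      exact hjb
  -- now suppose τ relates a and b
  intro hrel
  obtain ⟨i, hi⟩ := (pOrb τ).symm hrel
  rw [pow_mod_cycle hcycle i] at hi
  rcases Nat.eq_zero_or_pos (i % j) with h0 | hpos
  · rw [h0, pow_zero, Equiv.Perm.one_apply] at hi
    exact hne hi.symm
  · rw [hwalk _ hpos (Nat.mod_lt i hjpos)] at hi
    exact hnota _ hpos (Nat.mod_lt i hjpos) hi

lemma scnt_split {σ : Equiv.Perm X} {a b : X} (h : (pOrb σ).r a b) (hne : a ≠ b) :
    scnt (pOrb (σ * Equiv.swap a b)) = scnt (pOrb σ) + 1 := by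
  have hnr := split_not_rel h hne
  have := scnt_merge hnr
  rwa [mul_assoc, Equiv.swap_mul_self, mul_one] at this

end Surgery

section Ree

variable {X : Type*} [Fintype X] [DecidableEq X]

def IsSwapElt (t : Equiv.Perm X) : Prop := ∃ a b : X, a ≠ b ∧ t = Equiv.swap a b

lemma scnt_pOrb_one : scnt (pOrb (1 : Equiv.Perm X)) = Fintype.card X := by
  apply scnt_eq_card
  intro x y
  constructor
  · rintro ⟨i, hi⟩
    rw [one_pow, Equiv.Perm.one_apply] at hi
    exact hi
  · rintro rfl
    exact ⟨0, rfl⟩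

lemma eq_one_of_scnt_eq_card {σ : Equiv.Perm X} (h : scnt (pOrb σ) = Fintype.card X) :
    σ = 1 := by
  by_contra hne
  obtain ⟨x, hx⟩ : ∃ x, σ x ≠ x := by
    by_contra hall
    push_neg at hall
    exact hne (Equiv.ext hall)
  have hcol : (Quotient.mk (pOrb σ) x) = Quotient.mk (pOrb σ) (σ x) :=
    Quotient.sound ⟨1, by rw [pow_one]⟩
  have hb := card_succ_le_of_surj_collision (Quotient.mk (pOrb σ)) x (σ x)
    Quotient.exists_rep (fun hh => hx hh.symm) hcol
  have hb' : Nat.card X = Fintype.card X := Nat.card_eq_fintype_card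
  unfold scnt at h
  omega

lemma swap_factorization (σ : Equiv.Perm X) :
    ∃ l : List (Equiv.Perm X), (∀ t ∈ l, IsSwapElt t) ∧ l.prod = σ ∧
      l.length + scnt (pOrb σ) = Fintype.card X := by
  have H : ∀ N (σ : Equiv.Perm X), Fintype.card X - scnt (pOrb σ) = N →
      ∃ l : List (Equiv.Perm X), (∀ t ∈ l, IsSwapElt t) ∧ l.prod = σ ∧
        l.length + scnt (pOrb σ) = Fintype.card X := by
    intro N
    induction N using Nat.strong_induction_on with
    | _ N ih =>
      intro σ hN
      by_cases h1 : σ = 1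
      · refine ⟨[], by simp, by simp [h1], ?_⟩
        rw [h1, scnt_pOrb_one]
        simp
      · obtain ⟨x, hx⟩ : ∃ x, σ x ≠ x := by
          by_contra hall
          push_neg at hall
          exact h1 (Equiv.ext hall)
        have hrel : (pOrb σ).r x (σ x) := ⟨1, by rw [pow_one]⟩
        have hne' : x ≠ σ x := fun h => hx h.symm
        have hsplit := scnt_split hrel hne'
        have hlt : scnt (pOrb σ) < Fintype.card X := by
          rcases lt_or_eq_of_le (scnt_le_card (pOrb σ)) with h | h
          · exact h
          · exact absurd (eq_one_of_scnt_eq_card h) h1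
        have hle' : scnt (pOrb (σ * Equiv.swap x (σ x))) ≤ Fintype.card X :=
          scnt_le_card _
        have hNpos : 0 < N := by omega
        obtain ⟨l', hsw', hprod', hlen'⟩ := ih (N - 1) (by omega) (σ * Equiv.swap x (σ x))
          (by rw [hsplit]; omega)
        refine ⟨l' ++ [Equiv.swap x (σ x)], ?_, ?_, ?_⟩
        · intro t ht
          rcases List.mem_append.mp ht with ht | ht
          · exact hsw' t ht
          · rw [List.mem_singleton.mp ht]
            exact ⟨x, σ x, hne', rfl⟩
        · rw [List.prod_append, List.prod_singleton, hprod', mul_assoc,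
            Equiv.swap_mul_self, mul_one]
        · rw [List.length_append, List.length_singleton]
          rw [hsplit] at hlen'
          omega
  exact H (Fintype.card X - scnt (pOrb σ)) σ rfl

lemma ree_bound [Nonempty X] (L : List (Equiv.Perm X)) (hsw : ∀ t ∈ L, IsSwapElt t)
    (hprod : L.prod = 1)
    (htr : ∀ x y : X, (gOrb {g | g ∈ L}).r x y) :
    2 * Fintype.card X ≤ L.length + 2 := by
  have key : ∀ j, j ≤ L.length →
      scnt (pOrb ((L.take j).prod)) + 2 * Fintype.card X ≤
        j + Fintype.card X + 2 * scnt (gOrb {g | g ∈ L.take j}) := by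
    intro j
    induction j with
    | zero =>
      intro _
      have h1 : scnt (pOrb ((List.take 0 L).prod)) = Fintype.card X := by
        rw [List.take_zero, List.prod_nil, scnt_pOrb_one]
      have h2 : scnt (gOrb {g | g ∈ L.take 0}) = Fintype.card X := by
        apply scnt_eq_card
        intro x y
        constructor
        · rintro ⟨g, hg, rfl⟩
          have hbot : Subgroup.closure ({g | g ∈ L.take 0} : Set (Equiv.Perm X)) = ⊥ := by
            rw [List.take_zero]
            convert Subgroup.closure_empty
            ext u
            simp
          rw [hbot, Subgroup.mem_bot] at hg
          rw [hg, Equiv.Perm.one_apply]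
        · rintro rfl
          exact ⟨1, one_mem _, rfl⟩
      omega
    | succ j ihj =>
      intro hj1
      have hj : j < L.length := Nat.lt_of_succ_le hj1
      have ihj' := ihj (le_of_lt hj)
      obtain ⟨a, b, hab, hteq⟩ := hsw (L[j]'hj) (List.getElem_mem hj)
      have hprodsucc : (L.take (j+1)).prod = (L.take j).prod * Equiv.swap a b := by
        rw [List.prod_take_succ L j hj, hteq]
      have hset : {g | g ∈ L.take (j+1)} = insert (Equiv.swap a b) {g | g ∈ L.take j} := by
        ext u
        simp only [Set.mem_setOf_eq, Set.mem_insert_iff, List.take_succ,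
          List.mem_append, List.getElem?_eq_getElem hj, Option.toList_some,
          List.mem_singleton, hteq]
        exact or_comm
      set σ := (L.take j).prod with hσ
      have hσmem : σ ∈ Subgroup.closure {g | g ∈ L.take j} :=
        Subgroup.list_prod_mem _ (fun t ht => Subgroup.subset_closure ht)
      have hnext : ∀ x y, (gOrb {g | g ∈ L.take (j+1)}).r x y ↔ (mrg (gOrb {g | g ∈ L.take j}) a b).r x y := by
        rw [hset]
        exact gOrb_insert_swap _ a b
      by_cases hab' : (gOrb {g | g ∈ L.take j}).r a b
      · -- group orbit count unchanged
        have hg' : scnt (gOrb {g | g ∈ L.take (j+1)}) = scnt (gOrb {g | g ∈ L.take j}) := by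
          apply scnt_congr
          intro x y
          rw [hnext x y, mrg_eq_of_rel hab']
        by_cases hpab : (pOrb σ).r a b
        · have := scnt_split hpab hab
          rw [hprodsucc]
          omega
        · have := scnt_merge hpab
          rw [hprodsucc]
          omega
      · -- forest step
        have hpab : ¬ (pOrb σ).r a b := fun h => hab' (pOrb_le_gOrb hσmem a b h)
        have hgle : scnt (gOrb {g | g ∈ L.take j}) ≤ scnt (gOrb {g | g ∈ L.take (j+1)}) + 1 := by
          have := scnt_le_scnt_mrg_succ (gOrb {g | g ∈ L.take j}) a b
          have he : scnt (gOrb {g | g ∈ L.take (j+1)}) = scnt (mrg (gOrb {g | g ∈ L.take j}) a b) :=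
            scnt_congr hnext
          omega
        have := scnt_merge hpab
        rw [hprodsucc]
        omega
  have hfin := key L.length le_rfl
  rw [List.take_length] at hfin
  rw [hprod, scnt_pOrb_one] at hfin
  have h1 : scnt (gOrb {g | g ∈ L}) = 1 := scnt_eq_one _ htr
  omega

end Ree

section CycleCount

variable {X : Type*} [Fintype X] [DecidableEq X]

lemma fixed_pow {σ : Equiv.Perm X} {x : X} (h : σ x = x) : ∀ i : ℕ, (σ ^ i) x = x := by
  intro i
  induction i with
  | zero => rfl
  | succ i ih => rw [pow_succ', Equiv.Perm.mul_apply, ih, h]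

lemma pOrb_rel_iff_sameCycle {σ : Equiv.Perm X} {x y : X} :
    (pOrb σ).r x y ↔ σ.SameCycle x y := by
  constructor
  · rintro ⟨i, rfl⟩
    exact ⟨(i : ℤ), by rw [zpow_natCast]⟩
  · intro h
    exact sameCycle_to_pOrb h

lemma scnt_pOrb_eq_card_factors_add (σ : Equiv.Perm X) :
    scnt (pOrb σ) = σ.cycleFactorsFinset.card + (Fintype.card X - σ.support.card) := by
  classical
  -- the classifying function
  have hwd : ∀ x y : X, (pOrb σ).r x y →
      (if h : σ x = x then (Sum.inr ⟨x, h⟩ : ↥σ.cycleFactorsFinset ⊕ {z : X // σ z = z})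
       else Sum.inl ⟨σ.cycleOf x, Equiv.Perm.cycleOf_mem_cycleFactorsFinset_iff.2
         (Equiv.Perm.mem_support.2 h)⟩) =
      (if h : σ y = y then (Sum.inr ⟨y, h⟩ : ↥σ.cycleFactorsFinset ⊕ {z : X // σ z = z})
       else Sum.inl ⟨σ.cycleOf y, Equiv.Perm.cycleOf_mem_cycleFactorsFinset_iff.2
         (Equiv.Perm.mem_support.2 h)⟩) := by
    intro x y hxy
    have hsc : σ.SameCycle x y := pOrb_rel_iff_sameCycle.mp hxy
    by_cases hx : σ x = x
    · have hyx : y = x := by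
        obtain ⟨i, rfl⟩ := hxy
        exact fixed_pow hx i
      subst hyx
      rfl
    · have hy : ¬ σ y = y := by
        intro hy
        obtain ⟨i, hi⟩ := (pOrb σ).symm hxy
        rw [fixed_pow hy i] at hi
        subst hi
        exact hx hy
      rw [dif_neg hx, dif_neg hy]
      congr 1
      exact Subtype.ext (hsc.cycleOf_eq)
  let F : Quotient (pOrb σ) → ↥σ.cycleFactorsFinset ⊕ {z : X // σ z = z} :=
    Quotient.lift _ hwd
  have hbij : Function.Bijective F := by
    constructor
    · intro u v huv
      obtain ⟨x, rfl⟩ := Quotient.exists_rep u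
      obtain ⟨y, rfl⟩ := Quotient.exists_rep v
      apply Quotient.sound
      have hFx : F (Quotient.mk _ x) = _ := rfl
      simp only [F, Quotient.lift_mk] at huv
      by_cases hx : σ x = x <;> by_cases hy : σ y = y
      · rw [dif_pos hx, dif_pos hy] at huv
        obtain rfl : x = y := congrArg Subtype.val (Sum.inr_injective huv)
        exact (pOrb σ).refl x
      · rw [dif_pos hx, dif_neg hy] at huv; exact absurd huv (by simp)
      · rw [dif_neg hx, dif_pos hy] at huv; exact absurd huv (by simp)
      · rw [dif_neg hx, dif_neg hy] at huv
        have hco : σ.cycleOf x = σ.cycleOf y := congrArg Subtype.val (Sum.inl_injective huv)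
        have hysup : y ∈ (σ.cycleOf y).support :=
          Equiv.Perm.mem_support_cycleOf_iff.2 ⟨Equiv.Perm.SameCycle.refl _ _, Equiv.Perm.mem_support.2 hy⟩
        rw [← hco] at hysup
        have := (Equiv.Perm.mem_support_cycleOf_iff.1 hysup).1
        exact pOrb_rel_iff_sameCycle.mpr this
    · rintro (⟨γ, hγ⟩ | ⟨z, hz⟩)
      · have hic : γ.IsCycle := (Equiv.Perm.mem_cycleFactorsFinset_iff.1 hγ).1
        have hne : γ.support.Nonempty := by
          rw [Finset.nonempty_iff_ne_empty, Ne, Equiv.Perm.support_eq_empty_iff]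
          exact hic.ne_one
        obtain ⟨x, hxsup⟩ := hne
        have hγx : γ = σ.cycleOf x := Equiv.Perm.cycle_is_cycleOf hxsup hγ
        have hσx : σ x ≠ x := by
          have := (Equiv.Perm.mem_cycleFactorsFinset_iff.1 hγ).2 x hxsup
          intro hfix
          rw [hfix] at this
          exact (Equiv.Perm.mem_support.1 hxsup) this
        refine ⟨Quotient.mk _ x, ?_⟩
        show (if h : σ x = x then _ else _) = _
        rw [dif_neg hσx]
        congr 1
        exact Subtype.ext hγx.symm
      · refine ⟨Quotient.mk _ z, ?_⟩
        show (if h : σ z = z then _ else _) = _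
        rw [dif_pos hz]
  have hcard := Nat.card_eq_of_bijective F hbij
  rw [Nat.card_sum] at hcard
  have h1 : Nat.card (↥σ.cycleFactorsFinset) = σ.cycleFactorsFinset.card := by
    rw [Nat.card_eq_fintype_card, Fintype.card_coe]
  have h4 : Fintype.card {z : X // σ z ≠ z} = σ.support.card := by
    rw [Fintype.card_subtype]
    congr 1
  have h2 : Nat.card {z : X // σ z = z} = Fintype.card X - σ.support.card := by
    rw [Nat.card_eq_fintype_card, ← h4, ← Fintype.card_subtype_compl (fun z => σ z ≠ z)]
    exact Fintype.card_congr (Equiv.subtypeEquivRight (fun z => not_not.symm))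
  rw [scnt, hcard, h1, h2]

end CycleCount

section FullCycleType

variable {X : Type*} [Fintype X] [DecidableEq X]

lemma fullCycleType_card (σ : Equiv.Perm X) :
    (fullCycleType σ).card = σ.cycleFactorsFinset.card + (Fintype.card X - σ.support.card) := by
  rw [fullCycleType, Multiset.card_add, Multiset.card_replicate, Equiv.Perm.cycleType_def,
    Multiset.card_map]
  rfl

lemma scnt_pOrb_eq_fullCycleType_card (σ : Equiv.Perm X) :
    scnt (pOrb σ) = (fullCycleType σ).card := by
  rw [fullCycleType_card, scnt_pOrb_eq_card_factors_add]

lemma minimalPeriod_mem_fullCycleType (σ : Equiv.Perm X) (z : X) :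
    Function.minimalPeriod ⇑σ z ∈ fullCycleType σ := by
  by_cases hz : z ∈ σ.support
  · have hmove : σ z ≠ z := Equiv.Perm.mem_support.1 hz
    have hic : (σ.cycleOf z).IsCycle := Equiv.Perm.isCycle_cycleOf σ hmove
    have hord : orderOf (σ.cycleOf z) = (σ.cycleOf z).support.card := hic.orderOf
    have hdvd1 : Function.minimalPeriod ⇑σ z ∣ orderOf (σ.cycleOf z) := by
      apply Function.IsPeriodicPt.minimalPeriod_dvd
      show (⇑σ)^[orderOf (σ.cycleOf z)] z = z
      rw [perm_pow_apply, ← Equiv.Perm.cycleOf_pow_apply_self, pow_orderOf_eq_one,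
        Equiv.Perm.one_apply]
    have hdvd2 : orderOf (σ.cycleOf z) ∣ Function.minimalPeriod ⇑σ z := by
      apply orderOf_dvd_of_pow_eq_one
      rw [hic.pow_eq_one_iff]
      refine ⟨z, ?_, ?_⟩
      · rw [Equiv.Perm.cycleOf_apply_self]
        exact hmove
      · rw [Equiv.Perm.cycleOf_pow_apply_self, pow_minPeriod_apply]
    have heq : Function.minimalPeriod ⇑σ z = (σ.cycleOf z).support.card := by
      rw [← hord]
      exact Nat.dvd_antisymm hdvd1 hdvd2
    rw [heq, fullCycleType]
    apply Multiset.mem_add.2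
    left
    rw [Equiv.Perm.cycleType_def]
    apply Multiset.mem_map.2
    exact ⟨σ.cycleOf z, Finset.mem_def.1 (Equiv.Perm.cycleOf_mem_cycleFactorsFinset_iff.2 hz), rfl⟩
  · have hfix : σ z = z := Equiv.Perm.notMem_support.1 hz
    have h1 : Function.minimalPeriod ⇑σ z = 1 :=
      Function.minimalPeriod_eq_one_iff_isFixedPt.2 hfix
    have hlt : σ.support.card < Fintype.card X := by
      rw [← Finset.card_univ]
      apply Finset.card_lt_card
      rw [Finset.ssubset_univ_iff]
      intro hcontra
      rw [hcontra] at hz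
      exact hz (Finset.mem_univ z)
    rw [h1, fullCycleType]
    apply Multiset.mem_add.2
    right
    apply Multiset.mem_replicate.2
    exact ⟨by omega, rfl⟩

lemma multiset_card_le_sum (M : Multiset ℕ) (h : ∀ x ∈ M, 0 < x) : M.card ≤ M.sum := by
  induction M using Multiset.induction_on with
  | empty => simp
  | cons a s ih =>
    rw [Multiset.card_cons, Multiset.sum_cons]
    have ha : 0 < a := h a (Multiset.mem_cons_self a s)
    have hs := ih (fun x hx => h x (Multiset.mem_cons_of_mem hx))
    omega

lemma nu_eq_sum_sub_card (M : Multiset ℕ) (h : ∀ x ∈ M, 0 < x) :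
    nu M = M.sum - M.card := by
  induction M using Multiset.induction_on with
  | empty => simp [nu]
  | cons a s ih =>
    have ha : 0 < a := h a (Multiset.mem_cons_self a s)
    have hs := ih (fun x hx => h x (Multiset.mem_cons_of_mem hx))
    have hcs := multiset_card_le_sum s (fun x hx => h x (Multiset.mem_cons_of_mem hx))
    rw [nu, Multiset.map_cons, Multiset.sum_cons, Multiset.card_cons, Multiset.sum_cons]
    rw [nu] at hs
    omega

end FullCycleType

section Hat

variable {Ω : Type*} [Fintype Ω] [DecidableEq Ω] {m : ℕ} [NeZero m]

/-- Lift of a permutation to `Ω × ZMod m` with a shift. -/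
def liftPerm (g : Equiv.Perm Ω) (c : ZMod m) : Equiv.Perm (Ω × ZMod m) :=
  Equiv.prodCongr g (Equiv.addLeft c)

lemma liftPerm_apply (g : Equiv.Perm Ω) (c : ZMod m) (x : Ω) (e : ZMod m) :
    liftPerm g c (x, e) = (g x, c + e) := rfl

lemma liftPerm_mul (g h : Equiv.Perm Ω) (c e : ZMod m) :
    liftPerm g c * liftPerm h e = liftPerm (g * h) (c + e) := by
  apply Equiv.ext
  rintro ⟨x, u⟩
  show liftPerm g c (liftPerm h e (x, u)) = _
  rw [liftPerm_apply, liftPerm_apply, liftPerm_apply]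
  exact Prod.ext rfl (by ring)

lemma liftPerm_one : liftPerm (1 : Equiv.Perm Ω) (0 : ZMod m) = 1 := by
  apply Equiv.ext
  rintro ⟨x, u⟩
  show liftPerm 1 0 (x, u) = (x, u)
  rw [liftPerm_apply]
  exact Prod.ext rfl (by ring)

lemma liftPerm_inv (g : Equiv.Perm Ω) (c : ZMod m) :
    (liftPerm g c)⁻¹ = liftPerm g⁻¹ (-c) := by
  apply inv_eq_of_mul_eq_one_right
  rw [liftPerm_mul, mul_inv_cancel, add_neg_cancel, liftPerm_one]

lemma liftPerm_pow_apply (g : Equiv.Perm Ω) (c : ZMod m) (i : ℕ) (x : Ω) (e : ZMod m) :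
    ((liftPerm g c) ^ i) (x, e) = ((g ^ i) x, (i : ZMod m) * c + e) := by
  induction i with
  | zero => simp
  | succ i ih =>
    rw [pow_succ', Equiv.Perm.mul_apply, ih, liftPerm_apply, ← Equiv.Perm.mul_apply g,
      ← pow_succ']
    refine Prod.ext rfl ?_
    show c + ((i : ZMod m) * c + e) = ((i+1 : ℕ) : ZMod m) * c + e
    push_cast
    ring

lemma phase_eq {σ : Equiv.Perm Ω} {c : ZMod m}
    (hper : ∀ z : Ω, c * (Function.minimalPeriod ⇑σ z : ZMod m) = 0)
    (z : Ω) {A B : ℕ} (hAB : B ≤ A) (h : (σ ^ A) z = (σ ^ B) z) :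
    (A : ZMod m) * c = (B : ZMod m) * c := by
  have hz : (σ ^ (A - B)) z = z := by
    apply (σ ^ B).injective
    rw [← Equiv.Perm.mul_apply, ← pow_add]
    have : B + (A - B) = A := by omega
    rw [this, h]
  have hdvd : Function.minimalPeriod ⇑σ z ∣ (A - B) :=
    Function.IsPeriodicPt.minimalPeriod_dvd
      (by show (⇑σ)^[A-B] z = z; rw [perm_pow_apply]; exact hz)
  obtain ⟨q, hq⟩ := hdvd
  have hA : A = B + Function.minimalPeriod ⇑σ z * q := by omega
  have hc := hper z
  calc (A : ZMod m) * c = ((B + Function.minimalPeriod ⇑σ z * q : ℕ) : ZMod m) * c := by rw [← hA]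
    _ = (B : ZMod m) * c + (c * (Function.minimalPeriod ⇑σ z : ZMod m)) * q := by push_cast; ring
    _ = (B : ZMod m) * c := by rw [hc]; ring

lemma scnt_liftPerm (σ : Equiv.Perm Ω) (c : ZMod m)
    (hper : ∀ z : Ω, c * (Function.minimalPeriod ⇑σ z : ZMod m) = 0) :
    scnt (pOrb (liftPerm σ c)) = scnt (pOrb σ) * m := by
  classical
  -- base point and phase
  have hphi : ∀ x : Ω, ∃ i : ℕ, (σ ^ i) ((Quotient.mk (pOrb σ) x).out) = x := by
    intro x
    exact Quotient.exact (Quotient.out_eq (Quotient.mk (pOrb σ) x))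
  set bp : Ω → Ω := fun x => (Quotient.mk (pOrb σ) x).out with hbp
  let phi : Ω → ℕ := fun x => Nat.find (hphi x)
  have hphis : ∀ x, (σ ^ (phi x)) (bp x) = x := fun x => Nat.find_spec (hphi x)
  have hbp_eq : ∀ x y : Ω, (pOrb σ).r x y → bp x = bp y := by
    intro x y hxy
    show (Quotient.mk (pOrb σ) x).out = (Quotient.mk (pOrb σ) y).out
    rw [Quotient.sound hxy]
  -- the classifying map
  set F : Ω × ZMod m → Quotient (pOrb σ) × ZMod m :=
    fun p => (Quotient.mk (pOrb σ) p.1, p.2 - (phi p.1 : ZMod m) * c) with hF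
  have hFconst : ∀ p q : Ω × ZMod m, (pOrb (liftPerm σ c)).r p q → F p = F q := by
    rintro ⟨x, u⟩ ⟨y, v⟩ ⟨i, hi⟩
    rw [liftPerm_pow_apply] at hi
    obtain ⟨hy, hv⟩ := Prod.mk.injEq .. ▸ hi
    have hrel : (pOrb σ).r x y := ⟨i, hy⟩
    have hfst : Quotient.mk (pOrb σ) x = Quotient.mk (pOrb σ) y := Quotient.sound hrel
    have hzeq : bp y = bp x := (hbp_eq x y hrel).symm
    -- phase computation
    have hA : (σ ^ (i + phi x)) (bp x) = (σ ^ (phi y)) (bp x) := by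
      rw [pow_add, Equiv.Perm.mul_apply, hphis x]
      rw [← hzeq, hphis y, ← hy]
    have hph : ((i + phi x : ℕ) : ZMod m) * c = ((phi y : ℕ) : ZMod m) * c ∨
        ((phi y : ℕ) : ZMod m) * c = ((i + phi x : ℕ) : ZMod m) * c := by
      rcases le_total (phi y) (i + phi x) with hle | hle
      · exact Or.inl (phase_eq hper (bp x) hle hA)
      · exact Or.inr (phase_eq hper (bp x) hle hA.symm)
    have hph' : ((i + phi x : ℕ) : ZMod m) * c = ((phi y : ℕ) : ZMod m) * c := by
      rcases hph with h | h
      · exact h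
      · exact h.symm
    rw [hF]
    simp only
    rw [hfst]
    congr 1
    push_cast at hph'
    rw [← hv]
    linear_combination -hph'
  have hFinj : ∀ p q : Ω × ZMod m, F p = F q → (pOrb (liftPerm σ c)).r p q := by
    rintro ⟨x, u⟩ ⟨y, v⟩ hpq
    rw [hF] at hpq
    simp only [Prod.mk.injEq] at hpq
    obtain ⟨hfst, hsnd⟩ := hpq
    have hrel : (pOrb σ).r x y := Quotient.exact hfst
    have hzeq : bp x = bp y := hbp_eq x y hrel
    set L := Function.minimalPeriod ⇑σ (bp x) with hL
    have hLpos : 0 < L := minPeriod_pos σ (bp x)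
    have hLper : (σ ^ L) (bp x) = (bp x) := pow_minPeriod_apply σ (bp x)
    have hphixL : phi x ≤ phi x * L := Nat.le_mul_of_pos_right _ hLpos
    set j := phi y + phi x * L - phi x with hj
    have hjeq : j + phi x = phi y + phi x * L := by omega
    have hjx : (σ ^ j) x = y := by
      have h1 : (σ ^ (j + phi x)) (bp x) = (σ ^ j) x := by
        rw [pow_add, Equiv.Perm.mul_apply, hphis x]
      have h2 : (σ ^ (j + phi x)) (bp x) = y := by
        rw [hjeq]
        rw [pow_mod_cycle hLper (phi y + phi x * L), Nat.add_mul_mod_self_right,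
          ← pow_mod_cycle hLper (phi y), hzeq, hphis y]
      rw [← h1, h2]
    have hLc : (L : ZMod m) * c = 0 := by
      have := hper (bp x)
      linear_combination this
    have hjc : (j : ZMod m) * c + u = v := by
      have hcast : ((j : ℕ) : ZMod m) + ((phi x : ℕ) : ZMod m) =
          ((phi y : ℕ) : ZMod m) + ((phi x : ℕ) : ZMod m) * ((L : ℕ) : ZMod m) := by
        have := congrArg (fun t : ℕ => (t : ZMod m)) hjeq
        push_cast at this
        linear_combination this
      have := congrArg (fun t : ZMod m => t * c) hcast
      -- (j + phi x) c = (phi y + phi x L) c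
      have hv' : u - (phi x : ZMod m) * c = v - (phi y : ZMod m) * c := hsnd
      linear_combination this + hv' + (phi x : ZMod m) * hLc
    exact ⟨j, by rw [liftPerm_pow_apply, hjx, hjc]⟩
  have hFsurj : Function.Surjective F := by
    rintro ⟨q, u⟩
    refine ⟨(q.out, u), ?_⟩
    rw [hF]
    simp only
    have hout : Quotient.mk (pOrb σ) q.out = q := Quotient.out_eq q
    have hbpout : bp q.out = q.out := by
      show (Quotient.mk (pOrb σ) q.out).out = q.out
      rw [hout]
    have hphi0 : phi q.out = 0 := by
      rw [Nat.find_eq_zero]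
      rw [pow_zero]
      show (1 : Equiv.Perm Ω) (bp q.out) = q.out
      rw [Equiv.Perm.one_apply, hbpout]
    rw [hout, hphi0]
    norm_num
  -- descend to quotient
  let Fbar : Quotient (pOrb (liftPerm σ c)) → Quotient (pOrb σ) × ZMod m :=
    Quotient.lift F (fun p q h => hFconst p q h)
  have hbij : Function.Bijective Fbar := by
    constructor
    · intro a b hab
      obtain ⟨p, rfl⟩ := Quotient.exists_rep a
      obtain ⟨q, rfl⟩ := Quotient.exists_rep b
      exact Quotient.sound (hFinj p q hab)
    · intro w
      obtain ⟨p, hp⟩ := hFsurj w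
      exact ⟨Quotient.mk _ p, hp⟩
  have hcard := Nat.card_eq_of_bijective Fbar hbij
  rw [Nat.card_prod, Nat.card_zmod] at hcard
  rw [scnt, scnt, hcard]

end Hat

section NotTransitive

lemma conj_map_prod {G : Type*} [Group G] (g : G) (l : List G) :
    (l.map fun τ => g⁻¹ * τ * g).prod = g⁻¹ * l.prod * g := by
  induction l with
  | nil => simp
  | cons h tl ih =>
    simp only [List.map_cons, List.prod_cons, ih]
    group

lemma conj_inv_reverse_prod {G : Type*} [Group G] (g : G) (l : List G) :
    (l.reverse.map fun τ => g⁻¹ * τ⁻¹ * g).prod = g⁻¹ * l.prod⁻¹ * g := by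
  induction l with
  | nil => simp
  | cons h tl ih =>
    rw [List.reverse_cons, List.map_append, List.prod_append, ih, List.prod_cons]
    simp only [List.map_cons, List.map_nil, List.prod_cons, List.prod_nil]
    group

variable {Ω : Type*} [Fintype Ω] [DecidableEq Ω]

lemma hat_not_transitive (d k m : ℕ) [NeZero k] [NeZero m]
    (hcard : Fintype.card Ω = d) (hdodd : Odd d) (hdpos : 0 < d)
    (hm2 : 2 ≤ m) (hmd : m ∣ d)
    (α : Fin k → Equiv.Perm Ω) (ω : Equiv.Perm Ω)
    (s : Fin k → ZMod m) (t : ZMod m)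
    (hper : ∀ i z, (s i) * (Function.minimalPeriod ⇑(α i) z : ZMod m) = 0)
    (hnusum : ∑ i, (d - scnt (pOrb (α i))) = d - 1)
    (hscle : ∀ i, scnt (pOrb (α i)) ≤ d)
    (hω2 : (liftPerm ω t : Equiv.Perm (Ω × ZMod m)) ^ 2
      = (List.ofFn (fun i => liftPerm (α i) (s i))).prod) :
    ¬ (∀ p q : Ω × ZMod m, ∃ gh ∈ Subgroup.closure
        (Set.range (fun i => liftPerm (α i) (s i)) ∪ {liftPerm ω t}), gh p = q) := by
  intro htr
  classical
  have hΩne : Nonempty Ω := by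
    rw [← Fintype.card_pos_iff, hcard]; exact hdpos
  set αh : Fin k → Equiv.Perm (Ω × ZMod m) := fun i => liftPerm (α i) (s i) with hαh
  set ωh : Equiv.Perm (Ω × ZMod m) := liftPerm ω t with hωh
  set Ph : Equiv.Perm (Ω × ZMod m) := (List.ofFn αh).prod with hPh
  set Δgens : Set (Equiv.Perm (Ω × ZMod m)) :=
    Set.range αh ∪ Set.range (fun i => ωh⁻¹ * αh i * ωh) with hΔgens
  set Δ : Subgroup (Equiv.Perm (Ω × ZMod m)) := Subgroup.closure Δgens with hΔ
  have hαΔ : ∀ i, αh i ∈ Δ := fun i =>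
    Subgroup.subset_closure (Or.inl ⟨i, rfl⟩)
  have hcαΔ : ∀ i, ωh⁻¹ * αh i * ωh ∈ Δ := fun i =>
    Subgroup.subset_closure (Or.inr ⟨i, rfl⟩)
  have hPΔ : Ph ∈ Δ := by
    apply Subgroup.list_prod_mem
    intro x hx
    obtain ⟨i, rfl⟩ := List.mem_ofFn.mp hx
    exact hαΔ i
  have hω2Δ : ωh ^ 2 ∈ Δ := by rw [hω2]; exact hPΔ
  -- conjugation by ωh normalizes Δ
  have hconj : ∀ δ ∈ Δ, ωh * δ * ωh⁻¹ ∈ Δ ∧ ωh⁻¹ * δ * ωh ∈ Δ := by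
    intro δ hδ
    refine Subgroup.closure_induction
      (p := fun δ _ => ωh * δ * ωh⁻¹ ∈ Δ ∧ ωh⁻¹ * δ * ωh ∈ Δ) ?_ ?_ ?_ ?_ hδ
    · rintro x (⟨i, rfl⟩ | ⟨i, rfl⟩)
      · constructor
        · have he : ωh * αh i * ωh⁻¹ = ωh ^ 2 * (ωh⁻¹ * αh i * ωh) * (ωh ^ 2)⁻¹ := by rw [pow_two]; group
          rw [he]
          exact mul_mem (mul_mem hω2Δ (hcαΔ i)) (inv_mem hω2Δ)
        · exact hcαΔ i
      · constructor
        · have he : ωh * (ωh⁻¹ * αh i * ωh) * ωh⁻¹ = αh i := by group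
          rw [he]
          exact hαΔ i
        · have he : ωh⁻¹ * (ωh⁻¹ * αh i * ωh) * ωh = (ωh ^ 2)⁻¹ * αh i * ωh ^ 2 := by rw [pow_two]; group
          rw [he]
          exact mul_mem (mul_mem (inv_mem hω2Δ) (hαΔ i)) hω2Δ
    · constructor <;> simpa using one_mem Δ
    · rintro x y _ _ ⟨hx1, hx2⟩ ⟨hy1, hy2⟩
      constructor
      · have he : ωh * (x * y) * ωh⁻¹ = (ωh * x * ωh⁻¹) * (ωh * y * ωh⁻¹) := by group
        rw [he]; exact mul_mem hx1 hy1
      · have he : ωh⁻¹ * (x * y) * ωh = (ωh⁻¹ * x * ωh) * (ωh⁻¹ * y * ωh) := by group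
        rw [he]; exact mul_mem hx2 hy2
    · rintro x _ ⟨hx1, hx2⟩
      constructor
      · have he : ωh * x⁻¹ * ωh⁻¹ = (ωh * x * ωh⁻¹)⁻¹ := by group
        rw [he]; exact inv_mem hx1
      · have he : ωh⁻¹ * x⁻¹ * ωh = (ωh⁻¹ * x * ωh)⁻¹ := by group
        rw [he]; exact inv_mem hx2
  -- total orbit relation of Δ
  obtain ⟨p₀⟩ : Nonempty (Ω × ZMod m) := inferInstance
  set R := gOrb Δgens with hR
  set A : Set (Ω × ZMod m) := {q | R.r p₀ q} with hA
  set B : Set (Ω × ZMod m) := {q | R.r (ωh p₀) q} with hB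
  have hcover : ∀ q, q ∈ A ∨ q ∈ B := by
    have hAB : ∀ gh ∈ Subgroup.closure (Set.range αh ∪ {ωh}),
        ∀ q, (q ∈ A ∨ q ∈ B) → (gh q ∈ A ∨ gh q ∈ B) := by
      intro gh hgh
      refine Subgroup.closure_induction
        (p := fun gh _ => ∀ q, (q ∈ A ∨ q ∈ B) → (gh q ∈ A ∨ gh q ∈ B)) ?_ ?_ ?_ ?_ hgh
      · rintro x (⟨i, rfl⟩ | hx) q hq
        · rcases hq with hq | hq
          · exact Or.inl (R.trans hq ⟨αh i, hαΔ i, rfl⟩)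
          · exact Or.inr (R.trans hq ⟨αh i, hαΔ i, rfl⟩)
        · rw [Set.mem_singleton_iff.mp hx]
          rcases hq with hq | hq
          · obtain ⟨δ, hδ, hδq⟩ := hq
            right
            refine ⟨ωh * δ * ωh⁻¹, (hconj δ hδ).1, ?_⟩
            show (ωh * δ * ωh⁻¹) (ωh p₀) = ωh q
            rw [Equiv.Perm.mul_apply, Equiv.Perm.mul_apply, Equiv.Perm.inv_apply_self, hδq]
          · obtain ⟨δ, hδ, hδq⟩ := hq
            left
            refine ⟨(ωh * δ * ωh⁻¹) * ωh ^ 2, mul_mem (hconj δ hδ).1 hω2Δ, ?_⟩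
            show ((ωh * δ * ωh⁻¹) * ωh ^ 2) p₀ = ωh q
            have : (ωh ^ 2) p₀ = ωh (ωh p₀) := by
              rw [pow_two, Equiv.Perm.mul_apply]
            rw [Equiv.Perm.mul_apply, this, Equiv.Perm.mul_apply, Equiv.Perm.mul_apply,
              Equiv.Perm.inv_apply_self, hδq]
      · intro q hq; simpa using hq
      · intro x y _ _ ihx ihy q hq
        rw [Equiv.Perm.mul_apply]
        exact ihx _ (ihy q hq)
      · intro g _ ihg
        have hpow : ∀ n : ℕ, ∀ q, (q ∈ A ∨ q ∈ B) → ((g ^ n) q ∈ A ∨ (g ^ n) q ∈ B) := by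
          intro n
          induction n with
          | zero => intro q hq; simpa using hq
          | succ n ihn =>
            intro q hq
            rw [pow_succ', Equiv.Perm.mul_apply]
            exact ihg _ (ihn q hq)
        have hginv : g⁻¹ = g ^ (orderOf g - 1) := by
          have ho : 0 < orderOf g := orderOf_pos g
          symm
          apply eq_inv_of_mul_eq_one_left
          rw [← pow_succ, Nat.sub_add_cancel ho, pow_orderOf_eq_one]
        rw [hginv]
        exact hpow _
    intro q
    obtain ⟨gh, hgh, hghq⟩ := htr p₀ q
    rw [← hghq]
    exact hAB gh hgh p₀ (Or.inl (R.refl p₀))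
  have htot : ∀ p q : Ω × ZMod m, R.r p q := by
    by_cases hint : ∃ q, q ∈ A ∧ q ∈ B
    · obtain ⟨q₀, hq₀A, hq₀B⟩ := hint
      have hpω : R.r p₀ (ωh p₀) := R.trans hq₀A (R.symm hq₀B)
      have hallA : ∀ q, R.r p₀ q := by
        intro q
        rcases hcover q with h | h
        · exact h
        · exact R.trans hpω h
      intro p q
      exact R.trans (R.symm (hallA p)) (hallA q)
    · exfalso
      push_neg at hint
      have hdisj : Disjoint A B := by
        rw [Set.disjoint_left]
        intro q hqA hqB
        exact hint q hqA hqB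
      have hBA : B = ωh '' A := by
        apply Set.eq_of_subset_of_subset
        · rintro q ⟨δ, hδ, hδq⟩
          refine ⟨(ωh⁻¹ * δ * ωh) p₀, ⟨ωh⁻¹ * δ * ωh, (hconj δ hδ).2, rfl⟩, ?_⟩
          show ωh ((ωh⁻¹ * δ * ωh) p₀) = q
          rw [Equiv.Perm.mul_apply, Equiv.Perm.mul_apply, ← hδq]
          rw [Equiv.Perm.apply_inv_self]
        · rintro q ⟨q', ⟨δ, hδ, hδq⟩, rfl⟩
          refine ⟨ωh * δ * ωh⁻¹, (hconj δ hδ).1, ?_⟩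
          show (ωh * δ * ωh⁻¹) (ωh p₀) = ωh q'
          rw [Equiv.Perm.mul_apply, Equiv.Perm.mul_apply, Equiv.Perm.inv_apply_self, hδq]
      have huniv : A ∪ B = Set.univ := Set.eq_univ_of_forall (fun q => hcover q)
      have hcardAB : (A ∪ B).ncard = A.ncard + B.ncard :=
        Set.ncard_union_eq hdisj (Set.toFinite A) (Set.toFinite B)
      have hBcard : B.ncard = A.ncard := by
        rw [hBA, Set.ncard_image_of_injective _ (Equiv.injective ωh)]
      have hunivcard : (Set.univ : Set (Ω × ZMod m)).ncard = d * m := by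
        rw [Set.ncard_univ, Nat.card_eq_fintype_card, Fintype.card_prod, hcard, ZMod.card]
      have hmodd : Odd m := by
        obtain ⟨e, he⟩ := hmd
        rw [he] at hdodd
        exact (Nat.odd_mul.mp hdodd).1
      have hdm_odd : Odd (d * m) := Nat.odd_mul.mpr ⟨hdodd, hmodd⟩
      rw [huniv, hunivcard, hBcard] at hcardAB
      obtain ⟨c', hc'⟩ := hdm_odd
      omega
  -- swap factorizations
  have hBex : ∀ i : Fin k, ∃ l : List (Equiv.Perm (Ω × ZMod m)),
      (∀ τ ∈ l, IsSwapElt τ) ∧ l.prod = αh i ∧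
        l.length + scnt (pOrb (αh i)) = Fintype.card (Ω × ZMod m) :=
    fun i => swap_factorization (αh i)
  choose Bl hBsw hBprod hBlen using hBex
  have hscnt_lift : ∀ i, scnt (pOrb (αh i)) = scnt (pOrb (α i)) * m :=
    fun i => scnt_liftPerm (α i) (s i) (hper i)
  have hcardhat : Fintype.card (Ω × ZMod m) = d * m := by
    rw [Fintype.card_prod, hcard, ZMod.card]
  have hBlen' : ∀ i, (Bl i).length = (d - scnt (pOrb (α i))) * m := by
    intro i
    have h1 := hBlen i
    rw [hscnt_lift i, hcardhat] at h1
    have h2 := hscle i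
    have h3 : (d - scnt (pOrb (α i))) * m + scnt (pOrb (α i)) * m = d * m := by
      rw [← Nat.add_mul, Nat.sub_add_cancel h2]
    omega
  set BB : List (Equiv.Perm (Ω × ZMod m)) := (List.ofFn Bl).flatten with hBB
  have hBBprod : BB.prod = Ph := by
    rw [hBB, List.prod_flatten, List.map_ofFn, hPh]
    have hfe : (List.prod ∘ Bl) = αh := funext (fun i => hBprod i)
    rw [hfe]
  have hBBlen : BB.length = (d - 1) * m := by
    rw [hBB, List.length_flatten, List.map_ofFn]
    have : (List.ofFn fun i => (Bl i).length).sum = ∑ i, (Bl i).length := List.sum_ofFn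
    rw [show ((List.length ∘ fun i => Bl i) = fun i => (Bl i).length) from rfl, this]
    calc ∑ i, (Bl i).length = ∑ i, (d - scnt (pOrb (α i))) * m := by
          apply Finset.sum_congr rfl; intro i _; exact hBlen' i
      _ = (∑ i, (d - scnt (pOrb (α i)))) * m := by rw [Finset.sum_mul]
      _ = (d - 1) * m := by rw [hnusum]
  set CC : List (Equiv.Perm (Ω × ZMod m)) :=
    BB.reverse.map (fun τ => ωh⁻¹ * τ⁻¹ * ωh) with hCC
  set LL := BB ++ CC with hLL
  have hLLprod : LL.prod = 1 := by
    rw [hLL, List.prod_append, hCC, conj_inv_reverse_prod, hBBprod, ← hω2]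
    group
  have hBBsw : ∀ τ ∈ BB, IsSwapElt τ := by
    intro τ hτ
    obtain ⟨l', hl', hτl'⟩ := List.mem_flatten.mp hτ
    obtain ⟨i, rfl⟩ := List.mem_ofFn.mp hl'
    exact hBsw i τ hτl'
  have hLLsw : ∀ τ ∈ LL, IsSwapElt τ := by
    intro τ hτ
    rcases List.mem_append.mp hτ with hτ | hτ
    · exact hBBsw τ hτ
    · rw [hCC] at hτ
      obtain ⟨τ', hτ', rfl⟩ := List.mem_map.mp hτ
      obtain ⟨a, b, hab, rfl⟩ := hBBsw τ' (List.mem_reverse.mp hτ')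
      refine ⟨ωh⁻¹ a, ωh⁻¹ b, fun h => hab (ωh⁻¹.injective h), ?_⟩
      rw [Equiv.swap_inv,
        show Equiv.swap (ωh⁻¹ a) (ωh⁻¹ b) = ωh⁻¹ * Equiv.swap a b * (ωh⁻¹)⁻¹ from
          Equiv.swap_apply_apply ωh⁻¹ a b, inv_inv]
  have hΔle : Δ ≤ Subgroup.closure {g | g ∈ LL} := by
    rw [hΔ]
    apply (Subgroup.closure_le _).mpr
    rintro x (⟨i, rfl⟩ | ⟨i, rfl⟩)
    · show αh i ∈ _
      rw [← hBprod i]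
      apply Subgroup.list_prod_mem
      intro τ hτ
      apply Subgroup.subset_closure
      show τ ∈ LL
      rw [hLL]
      apply List.mem_append_left
      exact List.mem_flatten.mpr ⟨Bl i, List.mem_ofFn.mpr ⟨i, rfl⟩, hτ⟩
    · show ωh⁻¹ * αh i * ωh ∈ _
      rw [← hBprod i, ← conj_map_prod]
      apply Subgroup.list_prod_mem
      intro τ hτ
      obtain ⟨τ', hτ', rfl⟩ := List.mem_map.mp hτ
      have hτBB : τ' ∈ BB := List.mem_flatten.mpr ⟨Bl i, List.mem_ofFn.mpr ⟨i, rfl⟩, hτ'⟩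
      have hmem : ωh⁻¹ * τ'⁻¹ * ωh ∈ LL := by
        rw [hLL]
        apply List.mem_append_right
        rw [hCC]
        exact List.mem_map.mpr ⟨τ', List.mem_reverse.mpr hτBB, rfl⟩
      have he : ωh⁻¹ * τ' * ωh = (ωh⁻¹ * τ'⁻¹ * ωh)⁻¹ := by group
      rw [he]
      exact inv_mem (Subgroup.subset_closure hmem)
  have hLLtr : ∀ x y : Ω × ZMod m, (gOrb {g | g ∈ LL}).r x y := by
    intro x y
    obtain ⟨g, hg, hgx⟩ := htot x y
    exact ⟨g, hΔle hg, hgx⟩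
  haveI : Nonempty Ω := hΩne
  have hree := ree_bound LL hLLsw hLLprod hLLtr
  have hLLlen : LL.length = 2 * ((d - 1) * m) := by
    rw [hLL, List.length_append, hCC, List.length_map, List.length_reverse, hBBlen]
    ring
  rw [hcardhat, hLLlen] at hree
  obtain ⟨d', rfl⟩ : ∃ d', d = d' + 1 := ⟨d - 1, by omega⟩
  have he1 : (d' + 1) * m = d' * m + m := by ring
  have he2 : (d' + 1 - 1) * m = d' * m := by simp
  rw [he2, he1] at hree
  omega

end NotTransitive

section Hat2

variable {Ω : Type*} [Fintype Ω] [DecidableEq Ω] {m : ℕ} [NeZero m]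

lemma liftPerm_list_prod {ι : Type*} (l : List ι) (f : ι → Equiv.Perm Ω) (c : ι → ZMod m) :
    (l.map fun i => liftPerm (f i) (c i)).prod = liftPerm ((l.map f).prod) ((l.map c).sum) := by
  induction l with
  | nil => simp [liftPerm_one]
  | cons a tl ih =>
    simp only [List.map_cons, List.prod_cons, List.sum_cons, ih, liftPerm_mul]

end Hat2

theorem statement_19' {Ω : Type*} [Fintype Ω] [DecidableEq Ω] (d k : ℕ) [NeZero k]
    (hcard : Fintype.card Ω = d) (hd : Odd d) (hdpos : 0 < d) (hnp : ¬ d.Prime)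
    (hk : 3 ≤ k)
    (D : Fin k → Multiset ℕ) (hP : ∀ i, IsPartitionOf d (D i))
    (hsum : ∑ i, nu (D i) = d - 1)
    (α : Fin k → Equiv.Perm Ω) (hα : ∀ i, fullCycleType (α i) = D i)
    (ω : Equiv.Perm Ω) (hω : ω ^ 2 = (List.ofFn α).prod)
    (htrans : SubgroupTransitive (Subgroup.closure (Set.range α ∪ {ω})))
    (hg1 : 1 < (D 0).gcd) (hg2 : (D 0).gcd ∣ d) (hg3 : (D 0).gcd < d)
    (hnt : ¬ SubgroupTransitive (Subgroup.closure (Set.range α))) :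
    SubgroupImprimitive (Subgroup.closure (Set.range α ∪ {ω})) := by
  classical
  set G := Subgroup.closure (Set.range α ∪ {ω}) with hG
  refine ⟨htrans, ?_⟩
  intro hprim
  set m := (D 0).gcd with hm
  have hm2 : 2 ≤ m := hg1
  haveI : NeZero m := ⟨by omega⟩
  haveI hΩne : Nonempty Ω := by rw [← Fintype.card_pos_iff, hcard]; exact hdpos
  have hmodd : Odd m := by
    obtain ⟨e, he⟩ := hg2
    rw [he] at hd
    exact (Nat.odd_mul.mp hd).1
  set s : Fin k → ZMod m := fun i => if i = 0 then 1 else 0 with hs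
  set t : ZMod m := (((m + 1) / 2 : ℕ) : ZMod m) with ht
  -- period divisibility
  have hperiod0 : ∀ z : Ω, m ∣ Function.minimalPeriod ⇑(α 0) z := by
    intro z
    have hmem : Function.minimalPeriod ⇑(α 0) z ∈ fullCycleType (α 0) :=
      minimalPeriod_mem_fullCycleType (α 0) z
    rw [hα 0] at hmem
    exact Multiset.gcd_dvd hmem
  have hper : ∀ i z, (s i) * (Function.minimalPeriod ⇑(α i) z : ZMod m) = 0 := by
    intro i z
    by_cases hi : i = 0
    · subst hi
      have hs0 : s 0 = 1 := by rw [hs]; simp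
      rw [hs0, one_mul, ZMod.natCast_eq_zero_iff]
      exact hperiod0 z
    · rw [hs]
      simp [hi]
  -- scnt facts
  have hscnt : ∀ i, scnt (pOrb (α i)) = (D i).card := by
    intro i
    rw [scnt_pOrb_eq_fullCycleType_card, hα i]
  have hcardle : ∀ i, (D i).card ≤ d := by
    intro i
    rw [← (hP i).2]
    exact multiset_card_le_sum _ (hP i).1
  have hnusum : ∑ i, (d - scnt (pOrb (α i))) = d - 1 := by
    rw [← hsum]
    apply Finset.sum_congr rfl
    intro i _
    rw [hscnt i, nu_eq_sum_sub_card _ (hP i).1, (hP i).2]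
  have hscle : ∀ i, scnt (pOrb (α i)) ≤ d := fun i => (hscnt i) ▸ hcardle i
  -- 2t = 1
  have h2t : t + t = 1 := by
    rw [ht, ← Nat.cast_add]
    have he : (m + 1) / 2 + (m + 1) / 2 = m + 1 := by
      obtain ⟨mm, hmm⟩ := hmodd
      omega
    rw [he, Nat.cast_add, Nat.cast_one, ZMod.natCast_self, zero_add]
  have hsums : (∑ i, s i) = 1 := by
    rw [hs]
    simp
  -- hat relation
  have hω2hat : (liftPerm ω t : Equiv.Perm (Ω × ZMod m)) ^ 2
      = (List.ofFn (fun i => liftPerm (α i) (s i))).prod := by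
    have hlhs : (liftPerm ω t : Equiv.Perm (Ω × ZMod m)) ^ 2 = liftPerm (ω ^ 2) (t + t) := by
      rw [pow_two, liftPerm_mul, ← pow_two]
    have hrhs : (List.ofFn (fun i => liftPerm (α i) (s i))).prod
        = liftPerm ((List.ofFn α).prod) (∑ i, s i) := by
      rw [List.ofFn_eq_map, liftPerm_list_prod,
        show ((List.finRange k).map α).prod = (List.ofFn α).prod by rw [← List.ofFn_eq_map],
        show ((List.finRange k).map s).sum = ∑ i, s i by rw [← List.ofFn_eq_map, List.sum_ofFn]]
    rw [hlhs, hrhs, hω, h2t, hsums]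
  have hNT := hat_not_transitive d k m hcard hd hdpos hm2 hg2 α ω s t hper hnusum hscle hω2hat
  set Ghat := Subgroup.closure
    (Set.range (fun i => liftPerm (α i) (s i)) ∪ {liftPerm ω t}) with hGhat
  -- every element of Ghat is a lift
  have hshape : ∀ gh ∈ Ghat, ∃ (g : Equiv.Perm Ω) (c : ZMod m), gh = liftPerm g c := by
    intro gh hgh
    refine Subgroup.closure_induction
      (p := fun gh _ => ∃ (g : Equiv.Perm Ω) (c : ZMod m), gh = liftPerm g c) ?_ ?_ ?_ ?_ hgh
    · rintro x (⟨i, rfl⟩ | hx)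
      · exact ⟨α i, s i, rfl⟩
      · rw [Set.mem_singleton_iff.mp hx]
        exact ⟨ω, t, rfl⟩
    · exact ⟨1, 0, liftPerm_one.symm⟩
    · rintro x y _ _ ⟨g1, c1, rfl⟩ ⟨g2, c2, rfl⟩
      exact ⟨g1 * g2, c1 + c2, liftPerm_mul g1 g2 c1 c2⟩
    · rintro x _ ⟨g1, c1, rfl⟩
      exact ⟨g1⁻¹, -c1, liftPerm_inv g1 c1⟩
  -- every element of G lifts
  have hlift : ∀ g ∈ G, ∃ c : ZMod m, liftPerm g c ∈ Ghat := by
    intro g hg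
    refine Subgroup.closure_induction
      (p := fun g _ => ∃ c : ZMod m, liftPerm g c ∈ Ghat) ?_ ?_ ?_ ?_ hg
    · rintro x (⟨i, rfl⟩ | hx)
      · exact ⟨s i, Subgroup.subset_closure (Or.inl ⟨i, rfl⟩)⟩
      · rw [Set.mem_singleton_iff.mp hx]
        exact ⟨t, Subgroup.subset_closure (Or.inr rfl)⟩
    · exact ⟨0, by rw [liftPerm_one]; exact one_mem _⟩
    · rintro x y _ _ ⟨c1, hc1⟩ ⟨c2, hc2⟩
      exact ⟨c1 + c2, by rw [← liftPerm_mul]; exact mul_mem hc1 hc2⟩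
    · rintro x _ ⟨c1, hc1⟩
      exact ⟨-c1, by rw [← liftPerm_inv]; exact inv_mem hc1⟩
  obtain ⟨x₀⟩ := hΩne
  set O : Set (Ω × ZMod m) := {p | ∃ gh ∈ Ghat, gh (x₀, 0) = p} with hO
  have hx₀O : (x₀, (0 : ZMod m)) ∈ O := ⟨1, one_mem _, rfl⟩
  have hOinv : ∀ gh ∈ Ghat, ∀ p ∈ O, gh p ∈ O := by
    rintro gh hgh p ⟨g1, hg1, rfl⟩
    exact ⟨gh * g1, mul_mem hgh hg1, rfl⟩
  have hOtrans2 : ∀ p q, p ∈ O → q ∈ O → ∃ gh ∈ Ghat, gh p = q := by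
    rintro p q ⟨g1, hg1, rfl⟩ ⟨g2, hg2, rfl⟩
    refine ⟨g2 * g1⁻¹, mul_mem hg2 (inv_mem hg1), ?_⟩
    rw [Equiv.Perm.mul_apply, Equiv.Perm.inv_apply_self]
  have hE : ∀ (y z : Ω) (cc : ZMod m), (y, cc) ∈ O → (z, cc) ∈ O →
      ∀ c', (y, c') ∈ O → (z, c') ∈ O := by
    intro y z cc hy hz c' hy'
    obtain ⟨gh, hgh, hghE⟩ := hOtrans2 _ _ hy hz
    obtain ⟨g, e, rfl⟩ := hshape gh hgh
    rw [liftPerm_apply] at hghE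
    obtain ⟨hgy, hecc⟩ := Prod.mk.injEq .. ▸ hghE
    have he0 : e = 0 := by
      have : e + cc = 0 + cc := by rw [hecc, zero_add]
      exact add_right_cancel this
    have := hOinv _ hgh (y, c') hy'
    rw [liftPerm_apply, hgy, he0, zero_add] at this
    exact this
  set Λ : Set Ω := {y | (y, (0 : ZMod m)) ∈ O} with hΛ
  have himg : ∀ (g : Equiv.Perm Ω) (c : ZMod m), liftPerm g c ∈ Ghat →
      ⇑g '' Λ = {y | (y, c) ∈ O} := by
    intro g c hc
    ext z
    constructor
    · rintro ⟨y, hy, rfl⟩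
      have := hOinv _ hc (y, 0) hy
      rw [liftPerm_apply, add_zero] at this
      exact this
    · intro hz
      refine ⟨g⁻¹ z, ?_, Equiv.Perm.apply_inv_self g z⟩
      have hinvmem : liftPerm g⁻¹ (-c) ∈ Ghat := by
        rw [← liftPerm_inv]
        exact inv_mem hc
      have := hOinv _ hinvmem (z, c) hz
      rw [liftPerm_apply, neg_add_cancel] at this
      exact this
  have hblock : IsBlockOf G Λ := by
    refine ⟨⟨x₀, hx₀O⟩, ?_⟩
    intro g hg
    obtain ⟨c, hcmem⟩ := hlift g hg
    by_cases hdis : Disjoint (⇑g '' Λ) Λ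
    · exact Or.inr hdis
    · left
      rw [Set.not_disjoint_iff] at hdis
      obtain ⟨z, hz1, hz2⟩ := hdis
      rw [himg g c hcmem] at hz1
      rw [himg g c hcmem]
      ext y
      constructor
      · intro hy
        exact hE z y c hz1 hy 0 hz2
      · intro hy
        exact hE z y 0 hz2 hy c hz1
  obtain ⟨-, hblocks⟩ := hprim
  have htriv := hblocks Λ hblock
  rcases htriv with ⟨w, hw⟩ | huniv
  · -- singleton case
    have hx₀w : x₀ = w := by
      have : x₀ ∈ Λ := hx₀O
      rw [hw] at this
      exact this
    have hchoice : ∀ y : Ω, ∃ c : ZMod m, {z : Ω | (z, c) ∈ O} = {y} := by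
      intro y
      obtain ⟨g, hg, hgy⟩ := htrans x₀ y
      obtain ⟨c, hc⟩ := hlift g hg
      refine ⟨c, ?_⟩
      rw [← himg g c hc, hw, Set.image_singleton, ← hx₀w, hgy]
    choose f hf using hchoice
    have hfinj : Function.Injective f := by
      intro y z hyz
      have h1 := hf y
      have h2 := hf z
      rw [hyz] at h1
      rw [h1] at h2
      have : y ∈ ({z} : Set Ω) := by rw [← h2]; exact rfl
      exact this
    have hcle := Fintype.card_le_of_injective f hfinj
    rw [hcard, ZMod.card] at hcle
    omega
  · -- universal case: Ghat would be transitive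
    have hall : ∀ y : Ω, (y, (0 : ZMod m)) ∈ O := by
      intro y
      have : y ∈ Λ := by rw [huniv]; exact Set.mem_univ y
      exact this
    have hstep : ∀ (j : ℕ), ∀ y : Ω, (y, (j : ZMod m)) ∈ O := by
      intro j
      induction j with
      | zero => simpa using hall
      | succ j ihj =>
        intro y
        have h0mem : liftPerm (α 0) (s 0) ∈ Ghat :=
          Subgroup.subset_closure (Or.inl ⟨0, rfl⟩)
        have := hOinv _ h0mem ((α 0)⁻¹ y, (j : ZMod m)) (ihj _)
        rw [liftPerm_apply, Equiv.Perm.apply_inv_self] at this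
        have hs0 : s 0 = 1 := by rw [hs]; simp
        rw [hs0] at this
        have hcast : ((j + 1 : ℕ) : ZMod m) = 1 + (j : ZMod m) := by push_cast; ring
        rw [hcast]
        exact this
    have hOuniv : ∀ p : Ω × ZMod m, p ∈ O := by
      rintro ⟨y, cc⟩
      have := hstep cc.val y
      rwa [ZMod.natCast_val, ZMod.cast_id] at this
    apply hNT
    intro p q
    exact hOtrans2 p q (hOuniv p) (hOuniv q)


/-- For `k ≥ 3` and `d` odd not prime, if `G = ⟨α₁,…,αₖ,ω⟩` with
`ω² = α₁⋯αₖ` is transitive, `gcd(D₁)` is a proper divisor of `d` greater than 1, and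
`⟨α₁,…,αₖ⟩` is not transitive, then `G` is imprimitive. -/
theorem statement_19 {Ω : Type*} [Fintype Ω] [DecidableEq Ω] (d k : ℕ) [NeZero k]
    (hcard : Fintype.card Ω = d) (hd : Odd d) (hdpos : 0 < d) (hnp : ¬ d.Prime)
    (hk : 3 ≤ k)
    (D : Fin k → Multiset ℕ) (hP : ∀ i, IsPartitionOf d (D i))
    (hsum : ∑ i, nu (D i) = d - 1)
    (α : Fin k → Equiv.Perm Ω) (hα : ∀ i, fullCycleType (α i) = D i)
    (ω : Equiv.Perm Ω) (hω : ω ^ 2 = (List.ofFn α).prod)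
    (htrans : SubgroupTransitive (Subgroup.closure (Set.range α ∪ {ω})))
    (hg1 : 1 < (D 0).gcd) (hg2 : (D 0).gcd ∣ d) (hg3 : (D 0).gcd < d)
    (hnt : ¬ SubgroupTransitive (Subgroup.closure (Set.range α))) :
    SubgroupImprimitive (Subgroup.closure (Set.range α ∪ {ω})) := by
  exact statement_19' d k hcard hd hdpos hnp hk D hP hsum α hα ω hω htrans hg1 hg2 hg3 hnt
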